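/- arXiv:2203.00334 — 2 statements merged into one kernel-verified Lean document; each statement's English description precedes it below -/
import Mathlib

section
/- Let (G, τ) be an infinite Abelian topological group whose topology is totally bounded and which is topologically simple. Then G is torsion-free and G is algebraically isomorphic to a subgroup of the real numbers, i.e., there exists an injective group homomorphism from G into (ℝ, +). -/
/-- The coarsest topology on `G` making every character in `S` continuous. -/
noncomputable def tauS {G : Type*} [AddCommGroup G]
    (S : AddSubgroup (G →+ AddCircle (1 : ℝ))) : TopologicalSpace G :=
  ⨅ φ ∈ S, TopologicalSpace.induced ⇑φ inferInstance

/-- The topology of pointwise convergence on the dual group `Ĝ`. -/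
noncomputable def dualTop (G : Type*) [AddCommGroup G] :
    TopologicalSpace (G →+ AddCircle (1 : ℝ)) :=
  TopologicalSpace.induced (fun φ => (φ : G → AddCircle (1 : ℝ))) Pi.topologicalSpace

/-- A group topology on `G` is totally bounded if it is Hausdorff, makes `G` a
topological group, and every neighborhood `U` of `0` satisfies `G = F + U` for
some finite `F`. -/
def IsTotallyBoundedGroupTopology {G : Type*} [AddCommGroup G]
    (t : TopologicalSpace G) : Prop :=
  @IsTopologicalAddGroup G t _ ∧ @T2Space G t ∧
    ∀ U ∈ @nhds G t 0, ∃ F : Set G, F.Finite ∧ ∀ g : G, ∃ f ∈ F, ∃ u ∈ U, g = f + u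
theorem stmt17 {G : Type*} [AddCommGroup G] [Infinite G] (t : TopologicalSpace G)
    (ht : IsTotallyBoundedGroupTopology t)
    (hsimple : ∀ H : AddSubgroup G, @IsClosed G t (H : Set G) → H = ⊥ ∨ H = ⊤) :
    (∀ g : G, ∀ n : ℕ, 0 < n → n • g = 0 → g = 0) ∧
      ∃ f : G →+ ℝ, Function.Injective f := by
  classical
  obtain ⟨htg, ht2, htb⟩ := ht
  letI : TopologicalSpace G := t
  haveI : IsTopologicalAddGroup G := htg
  haveI : T2Space G := ht2
  -- ### Part 1 : torsion-freeness
  have tf : ∀ g : G, ∀ n : ℕ, 0 < n → n • g = 0 → g = 0 := by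
    intro g n hn hng
    have hzn : ((n : ℤ)) • g = 0 := by rwa [natCast_zsmul]
    have hfin : ((AddSubgroup.zmultiples g : AddSubgroup G) : Set G).Finite := by
      have hsub : ((AddSubgroup.zmultiples g : AddSubgroup G) : Set G)
          ⊆ (fun k : Fin n => ((k : ℕ) : ℤ) • g) '' Set.univ := by
        rintro x hx
        obtain ⟨m, rfl⟩ := AddSubgroup.mem_zmultiples_iff.mp hx
        have hn0 : (n : ℤ) ≠ 0 := by exact_mod_cast hn.ne'
        have hr0 : 0 ≤ m % (n : ℤ) := Int.emod_nonneg m hn0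
        have hrn : m % (n : ℤ) < (n : ℤ) := Int.emod_lt_of_pos m (by exact_mod_cast hn)
        have hmg : m • g = (m % (n : ℤ)) • g := by
          have hdecomp : m = m % (n : ℤ) + (n : ℤ) * (m / (n : ℤ)) := by
            rw [Int.emod_add_mul_ediv]
          calc m • g = (m % (n : ℤ) + (n : ℤ) * (m / (n : ℤ))) • g := by rw [← hdecomp]
            _ = (m % (n : ℤ)) • g + ((n : ℤ) * (m / (n : ℤ))) • g := add_zsmul _ _ _
            _ = (m % (n : ℤ)) • g + (m / (n : ℤ)) • (((n : ℤ)) • g) := by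
                rw [mul_comm, mul_zsmul]
            _ = (m % (n : ℤ)) • g := by rw [hzn, smul_zero, add_zero]
        refine ⟨⟨(m % (n : ℤ)).toNat, ?_⟩, Set.mem_univ _, ?_⟩
        · omega
        · simp only []
          rw [hmg]
          congr 1
          omega
      exact Set.Finite.subset ((Set.finite_univ).image _) hsub
    rcases hsimple _ (hfin.isClosed) with h | h
    · have : g ∈ AddSubgroup.zmultiples g := AddSubgroup.mem_zmultiples g
      rw [h, AddSubgroup.mem_bot] at this
      exact this
    · exfalso
      rw [h] at hfin
      simp only [AddSubgroup.coe_top] at hfin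
      exact Set.infinite_univ hfin
  refine ⟨tf, ?_⟩
  -- ### Part 2 : a sequence of shrinking symmetric neighborhoods with trivial closed core
  obtain ⟨x₀, hx₀⟩ := exists_ne (0 : G)
  have hx₀' : (0 : G) ∈ ({x₀}ᶜ : Set G) := by simpa using (Ne.symm hx₀)
  obtain ⟨C, hCmem, hCclosed, hCsub⟩ :=
    exists_mem_nhds_isClosed_subset (isOpen_compl_singleton.mem_nhds hx₀')
  have step : ∀ V : Set G, V ∈ nhds (0 : G) →
      ∃ W, W ∈ nhds (0 : G) ∧ (∀ a ∈ W, -a ∈ W) ∧ ∀ a ∈ W, ∀ b ∈ W, a + b ∈ V := by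
    intro V hV
    obtain ⟨W₀, hW₀, hsplit⟩ := exists_nhds_zero_half hV
    have hneg : (fun x : G => -x) ⁻¹' W₀ ∈ nhds (0 : G) := by
      have hcont : Filter.Tendsto (fun x : G => -x) (nhds 0) (nhds 0) := by
        simpa using (continuous_neg (G := G)).tendsto (0 : G)
      exact hcont hW₀
    refine ⟨W₀ ∩ (fun x : G => -x) ⁻¹' W₀, Filter.inter_mem hW₀ hneg, ?_, ?_⟩
    · rintro a ⟨h1, h2⟩
      exact ⟨h2, by simpa using h1⟩
    · rintro a ⟨ha, _⟩ b ⟨hb, _⟩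
      exact hsplit a ha b hb
  choose W hWmem hWsym hWadd using step
  set next : {V : Set G // V ∈ nhds (0 : G)} → {V : Set G // V ∈ nhds (0 : G)} :=
    fun p => ⟨W p.1 p.2, hWmem p.1 p.2⟩ with hnext
  set Useq : ℕ → {V : Set G // V ∈ nhds (0 : G)} := fun n => next^[n] ⟨C, hCmem⟩ with hUseq
  set V : ℕ → Set G := fun n => (Useq n).1 with hVdef
  have hVmem : ∀ n, V n ∈ nhds (0 : G) := fun n => (Useq n).2
  have hV0C : V 0 = C := rfl
  have hVsucc : ∀ n, V (n + 1) = W (V n) (Useq n).2 := by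
    intro n
    have h : Useq (n + 1) = next (Useq n) := Function.iterate_succ_apply' next n _
    simp only [hVdef, h, hnext]
    rfl
  have hVsym : ∀ n, ∀ a ∈ V (n + 1), -a ∈ V (n + 1) := by
    intro n a ha
    rw [hVsucc n] at ha ⊢
    exact hWsym _ _ a ha
  have hVadd : ∀ n, ∀ a ∈ V (n + 1), ∀ b ∈ V (n + 1), a + b ∈ V n := by
    intro n a ha b hb
    rw [hVsucc n] at ha hb
    exact hWadd _ _ a ha b hb
  have hV0 : ∀ n, (0 : G) ∈ V n := fun n => mem_of_mem_nhds (hVmem n)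
  have hVmono : ∀ n, V (n + 1) ⊆ V n := by
    intro n a ha
    have := hVadd n a ha 0 (hV0 (n + 1))
    simpa using this
  set K : AddSubgroup G :=
    { carrier := ⋂ n, closure (V n)
      zero_mem' := Set.mem_iInter.2 fun n => subset_closure (hV0 n)
      add_mem' := by
        intro a b ha hb
        refine Set.mem_iInter.2 fun n => ?_
        have ha' := Set.mem_iInter.1 ha (n + 1)
        have hb' := Set.mem_iInter.1 hb (n + 1)
        exact map_mem_closure₂ continuous_add ha' hb' fun x hx y hy => hVadd n x hx y hy
      neg_mem' := by
        intro a ha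
        refine Set.mem_iInter.2 fun n => ?_
        have ha' := Set.mem_iInter.1 ha (n + 1)
        exact map_mem_closure continuous_neg ha' fun x hx => hVmono n (hVsym n x hx) } with hK
  have hKclosed : IsClosed (K : Set G) := isClosed_iInter fun n => isClosed_closure
  have hKne : K ≠ ⊤ := by
    intro h
    have hx : x₀ ∈ K := h ▸ AddSubgroup.mem_top x₀
    have hx1 : x₀ ∈ closure (V 0) := Set.mem_iInter.1 hx 0
    rw [hV0C, hCclosed.closure_eq] at hx1
    exact (hCsub hx1) rfl
  have hKbot : K = ⊥ := (hsimple K hKclosed).resolve_right hKne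
  have hVzero : ∀ x : G, (∀ n, x ∈ V n) → x = 0 := by
    intro x hx
    have hmem : x ∈ K := Set.mem_iInter.2 fun n => subset_closure (hx n)
    rwa [hKbot, AddSubgroup.mem_bot] at hmem
  -- ### Part 3 : cardinality bound `#G ≤ 𝔠`
  choose Fs hFsfin hFssel using fun n => htb (V n) (hVmem n)
  choose cf hcfmem cu hcumem hceq using fun n g => hFssel n g
  have hΦinj : Function.Injective
      (fun (x : G) (n : ℕ) => (⟨cf (n + 1) x, hcfmem (n + 1) x⟩ : {a // a ∈ Fs (n + 1)})) := by
    intro x y hxy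
    have hsub : ∀ n, x - y ∈ V n := by
      intro n
      have h1 : cf (n + 1) x = cf (n + 1) y := congrArg Subtype.val (congrFun hxy n)
      have hx' := hceq (n + 1) x
      have hy' := hceq (n + 1) y
      have hxy' : x - y = cu (n + 1) x + -(cu (n + 1) y) := by
        conv_lhs => rw [hx', hy']
        rw [h1]; abel
      rw [hxy']
      exact hVadd n _ (hcumem (n + 1) x) _ (hVsym n _ (hcumem (n + 1) y))
    exact sub_eq_zero.1 (hVzero (x - y) hsub)
  have hcount : ∀ n : ℕ, ∃ e : {a // a ∈ Fs (n + 1)} → ℕ, Function.Injective e := by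
    intro n
    haveI : Finite {a // a ∈ Fs (n + 1)} := (hFsfin (n + 1)).to_subtype
    exact Countable.exists_injective_nat _
  choose en hen using hcount
  have hembinj : Function.Injective (fun (x : G) (n : ℕ) => en n ⟨cf (n + 1) x, hcfmem (n + 1) x⟩) := by
    intro x y hxy
    apply hΦinj
    funext n
    exact hen n (congrFun hxy n)
  have hcard : (Cardinal.mk G) ≤ Cardinal.continuum := by
    have h1 := Cardinal.lift_mk_le'.2
      ⟨⟨fun (x : G) (n : ℕ) => en n ⟨cf (n + 1) x, hcfmem (n + 1) x⟩, hembinj⟩⟩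
    have h2 : Cardinal.mk (ℕ → ℕ) = Cardinal.continuum := by
      rw [← Cardinal.power_def, Cardinal.mk_nat, Cardinal.aleph0_power_aleph0]
    rw [Cardinal.lift_uzero, h2, Cardinal.lift_continuum] at h1
    exact h1
  -- ### Part 4 : characters into ℚ separate points (via divisibility / Baer)
  have hz : ∀ g : G, g ≠ 0 → ∀ z : ℤ, z • g = 0 → z = 0 := by
    intro g hg z hzg
    rcases lt_trichotomy z 0 with h | h | h
    · exfalso
      apply hg
      have hzz : ((-z).toNat : ℕ) • g = 0 := by
        rw [← natCast_zsmul, Int.toNat_of_nonneg (by omega)]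
        simpa using hzg
      exact tf g _ (by omega) hzz
    · exact h
    · exfalso
      apply hg
      have hzz : (z.toNat : ℕ) • g = 0 := by
        rw [← natCast_zsmul, Int.toNat_of_nonneg (by omega)]
        exact hzg
      exact tf g _ (by omega) hzz
  have baer : Module.Baer ℤ ℚ := Module.Baer.of_divisible ℚ
  have char : ∀ g : G, g ≠ 0 → ∃ φ : G →+ ℚ, φ g = 1 := by
    intro g hg
    have iinj : Function.Injective (zmultiplesHom G g) := by
      intro a b hab
      simp only [zmultiplesHom_apply] at hab
      have : (a - b) • g = 0 := by simp [sub_zsmul, hab]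
      have := hz g hg _ this
      omega
    obtain ⟨φ, hφ⟩ := baer.extension_property_addMonoidHom (zmultiplesHom G g) iinj
      (Int.castAddHom ℚ)
    refine ⟨φ, ?_⟩
    have h1 := DFunLike.congr_fun hφ (1 : ℤ)
    simpa [zmultiplesHom_apply] using h1
  set φg : G → (G →+ ℚ) := fun g => if hg : g = 0 then 0 else (char g hg).choose with hφg
  have hφg_spec : ∀ g : G, g ≠ 0 → φg g g = 1 := by
    intro g hg
    simp only [hφg, dif_neg hg]
    exact (char g hg).choose_spec
  set Φ : G →+ (G → ℚ) :=
    { toFun := fun x g => φg g x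
      map_zero' := funext fun g => map_zero (φg g)
      map_add' := fun x y => funext fun g => map_add (φg g) x y } with hΦ
  have hΦinj2 : Function.Injective Φ := by
    rw [injective_iff_map_eq_zero Φ]
    intro x hx
    by_contra hx0
    have h1 : Φ x x = 0 := congrFun hx x
    rw [hΦ] at h1
    simp only [AddMonoidHom.coe_mk, ZeroHom.coe_mk] at h1
    rw [hφg_spec x hx0] at h1
    exact one_ne_zero h1
  -- ### Part 5 : embed the span into ℝ
  set M : Submodule ℚ (G → ℚ) := Submodule.span ℚ (Set.range (Φ : G → (G → ℚ))) with hM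
  have hrank : Module.rank ℚ M ≤ Cardinal.continuum := by
    refine le_trans (rank_span_le _) (le_trans Cardinal.mk_range_le hcard)
  set bM := Module.Basis.ofVectorSpace ℚ M with hbM
  set bR := Module.Basis.ofVectorSpace ℚ ℝ with hbR
  have hmkM : Cardinal.mk (Module.Basis.ofVectorSpaceIndex ℚ M) ≤ Cardinal.continuum := by
    rw [bM.mk_eq_rank'']
    exact hrank
  have hmkR : Cardinal.mk (Module.Basis.ofVectorSpaceIndex ℚ ℝ) = Cardinal.continuum := by
    rw [bR.mk_eq_rank'']
    exact Real.rank_rat_real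
  have hemb : Nonempty ((Module.Basis.ofVectorSpaceIndex ℚ M) ↪ (Module.Basis.ofVectorSpaceIndex ℚ ℝ)) := by
    rw [← Cardinal.lift_mk_le']
    rw [hmkR, Cardinal.lift_continuum]
    calc Cardinal.lift.{0} (Cardinal.mk (Module.Basis.ofVectorSpaceIndex ℚ M))
        ≤ Cardinal.lift.{0} Cardinal.continuum := Cardinal.lift_le.2 hmkM
      _ = Cardinal.continuum := by rw [Cardinal.lift_uzero]
  obtain ⟨e⟩ := hemb
  -- assemble the injective additive map `G →+ ℝ`
  set f₁ : G →+ M :=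
    { toFun := fun x => ⟨Φ x, Submodule.subset_span (Set.mem_range_self x)⟩
      map_zero' := by ext; simp
      map_add' := by intro x y; ext; simp } with hf₁
  have hf₁inj : Function.Injective f₁ := by
    intro x y hxy
    apply hΦinj2
    exact congrArg Subtype.val hxy
  have hmapinj : Function.Injective (Finsupp.mapDomain.addMonoidHom (M := ℚ) e) :=
    Finsupp.mapDomain_injective e.injective
  set fbig : G →+ ℝ :=
    ((bR.repr.symm.toLinearMap.toAddMonoidHom).comp
      ((Finsupp.mapDomain.addMonoidHom (M := ℚ) e).comp
        ((bM.repr.toLinearMap.toAddMonoidHom).comp f₁))) with hfbig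
  refine ⟨fbig, ?_⟩
  have : Function.Injective (bR.repr.symm.toLinearMap.toAddMonoidHom) :=
    bR.repr.symm.injective
  exact this.comp (hmapinj.comp ((bM.repr.injective).comp hf₁inj))
end

section
/- Let p be a prime and let K := ∏_{n ∈ ℕ, n ≥ 1} ℤ/p^nℤ, the product of the cyclic groups of order p^n, equipped with the product topology where each factor ℤ/p^nℤ is discrete. Then K contains at least 2^𝔠-many totally dense subgroups, where 𝔠 = 2^{ℵ₀}; that is, the set of subgroups H of K such that H ∩ L is dense in L for every closed subgroup L of K has cardinality at least 2^𝔠. -/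
/-- The product topology on `∏_{n ≥ 1} ℤ/p^nℤ` where each factor is discrete. -/
noncomputable def Ktop (p : ℕ) : TopologicalSpace (∀ n : ℕ, ZMod (p ^ (n + 1))) :=
  @Pi.topologicalSpace ℕ (fun n => ZMod (p ^ (n + 1))) (fun _ => ⊥)

noncomputable section
namespace TD18

open Cardinal Set

variable (p : ℕ)

abbrev KG := ∀ n : ℕ, ZMod (p ^ (n + 1))

def Tor : AddSubgroup (KG p) where
  carrier := {y | ∃ c : ℤ, c ≠ 0 ∧ c • y = 0}
  zero_mem' := ⟨1, one_ne_zero, smul_zero 1⟩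
  add_mem' := by
    rintro a b ⟨c, hc, hca⟩ ⟨d, hd, hdb⟩
    refine ⟨c * d, mul_ne_zero hc hd, ?_⟩
    rw [smul_add]
    have h1 : (c * d) • a = 0 := by rw [mul_smul, smul_comm, hca, smul_zero]
    have h2 : (c * d) • b = 0 := by rw [mul_smul, hdb, smul_zero]
    rw [h1, h2, add_zero]
  neg_mem' := by
    rintro a ⟨c, hc, hca⟩
    exact ⟨c, hc, by rw [smul_neg, hca, neg_zero]⟩

def cI (m : ℕ) (s : ℕ → Bool) (n : ℕ) : ℤ :=
  ∑ i ∈ Finset.range (n + 1), (if s i then ((p : ℤ)) ^ (m + 1 + i) else 0)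

def zel (x : KG p) (m : ℕ) (s : ℕ → Bool) : KG p :=
  fun n => ((cI p m s n : ℤ) : ZMod (p ^ (n + 1))) * x n

def eone : KG p := fun _ => 1

lemma dvd_cI (m n k : ℕ) (hk : k ≤ m) (s : ℕ → Bool) : ((p : ℤ)) ^ (k + 1) ∣ cI p m s n := by
  apply Finset.dvd_sum
  intro i _
  split
  · exact pow_dvd_pow _ (by omega)
  · exact dvd_zero _

lemma dvd_cI_sub (m : ℕ) (s : ℕ → Bool) {n n' : ℕ} (h : n ≤ n') :
    ((p : ℤ)) ^ (n + 1) ∣ cI p m s n' - cI p m s n := by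
  unfold cI
  rw [← Finset.sum_Ico_eq_sub _ (by omega : n + 1 ≤ n' + 1)]
  apply Finset.dvd_sum
  intro i hi
  rw [Finset.mem_Ico] at hi
  split
  · exact pow_dvd_pow _ (by omega)
  · exact dvd_zero _

lemma zel_low (x : KG p) (m : ℕ) (s : ℕ → Bool) {n : ℕ} (hn : n ≤ m) :
    zel p x m s n = 0 := by
  unfold zel
  have h0 : ((cI p m s n : ℤ) : ZMod (p ^ (n + 1))) = 0 := by
    rw [ZMod.intCast_zmod_eq_zero_iff_dvd]
    exact_mod_cast dvd_cI p m n n hn s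
  rw [h0, zero_mul]

lemma isUnit_one_add_p_mul (n : ℕ) (k : ZMod (p ^ (n + 1))) :
    IsUnit (1 + (p : ZMod (p ^ (n + 1))) * k) := by
  set a : ZMod (p ^ (n + 1)) := (p : ZMod (p ^ (n + 1))) * k with ha
  have hpow : a ^ (n + 1) = 0 := by
    have hp0 : ((p : ZMod (p ^ (n + 1)))) ^ (n + 1) = 0 := by
      rw [← Nat.cast_pow, ZMod.natCast_self]
    rw [ha, mul_pow, hp0, zero_mul]
  refine IsUnit.of_mul_eq_one (∑ i ∈ Finset.range (n + 1), (-a) ^ i) ?_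
  have h1 : (∑ i ∈ Finset.range (n + 1), (-a) ^ i) * (-a - 1) = (-a) ^ (n + 1) - 1 :=
    geom_sum_mul (-a) (n + 1)
  have h2 : (-a) ^ (n + 1) = (-1 : ZMod (p ^ (n + 1))) ^ (n + 1) * a ^ (n + 1) := by
    rw [neg_pow]
  calc (1 + a) * (∑ i ∈ Finset.range (n + 1), (-a) ^ i)
      = -((∑ i ∈ Finset.range (n + 1), (-a) ^ i) * (-a - 1)) := by ring
    _ = 1 := by rw [h1, h2, hpow, mul_zero, zero_sub, neg_neg]

lemma isUnit_coprime (hp : p.Prime) (n : ℕ) (d : ℕ) (hd : ¬ p ∣ d) :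
    IsUnit ((d : ZMod (p ^ (n + 1)))) := by
  rw [ZMod.isUnit_iff_coprime]
  exact Nat.Coprime.pow_right _ ((hp.coprime_iff_not_dvd.mpr hd).symm)

lemma cI_sub_factor (m : ℕ) (s t : ℕ → Bool) (i₀ : ℕ)
    (hmin : ∀ j, j < i₀ → s j = t j) {n : ℕ} (hn : i₀ ≤ n) :
    ∃ k : ℤ, cI p m s n - cI p m t n =
      (p : ℤ) ^ (m + 1 + i₀) *
        (((if s i₀ then (1:ℤ) else 0) - (if t i₀ then 1 else 0)) + p * k) := by
  set ε : ℕ → ℤ := fun i => (if s i then (1:ℤ) else 0) - (if t i then 1 else 0) with hε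
  have hsub : cI p m s n - cI p m t n = ∑ i ∈ Finset.range (n+1), ε i * (p:ℤ)^(m+1+i) := by
    unfold cI
    rw [← Finset.sum_sub_distrib]
    apply Finset.sum_congr rfl
    intro i _
    by_cases h1 : s i <;> by_cases h2 : t i <;> simp [hε, h1, h2]
  have hzero : ∀ i ∈ Finset.range i₀, ε i * (p:ℤ)^(m+1+i) = 0 := by
    intro i hi
    rw [Finset.mem_range] at hi
    simp [hε, hmin i hi]
  have hsplit : ∑ i ∈ Finset.range (n+1), ε i * (p:ℤ)^(m+1+i)
      = ∑ i ∈ Finset.Ico i₀ (n+1), ε i * (p:ℤ)^(m+1+i) := by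
    rw [← Finset.sum_range_add_sum_Ico _ (by omega : i₀ ≤ n+1),
      Finset.sum_eq_zero hzero, zero_add]
  have hIco : ∑ i ∈ Finset.Ico i₀ (n+1), ε i * (p:ℤ)^(m+1+i)
      = ∑ j ∈ Finset.range (n+1-i₀), ε (i₀+j) * (p:ℤ)^(m+1+(i₀+j)) := by
    rw [Finset.sum_Ico_eq_sum_range]
  refine ⟨∑ j ∈ Finset.range (n - i₀), ε (i₀+1+j) * (p:ℤ)^j, ?_⟩
  rw [hsub, hsplit, hIco]
  have hn1 : n + 1 - i₀ = (n - i₀) + 1 := by omega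
  rw [hn1, Finset.sum_range_succ']
  have hterm : ∀ j, ε (i₀+(j+1)) * (p:ℤ)^(m+1+(i₀+(j+1)))
      = (p:ℤ)^(m+1+i₀) * ((p:ℤ) * (ε (i₀+1+j) * (p:ℤ)^j)) := by
    intro j
    have e1 : i₀+(j+1) = i₀+1+j := by omega
    have e2 : m+1+(i₀+1+j) = (m+1+i₀)+(j+1) := by omega
    rw [e1, e2, pow_add, pow_succ]
    ring
  rw [Finset.sum_congr rfl (fun j _ => hterm j), ← Finset.mul_sum, ← Finset.mul_sum]
  simp only [add_zero]
  ring

lemma int_eq_zero (hp : p.Prime) (c : ℤ) (h : ∀ n, ((c : ℤ) : ZMod (p^(n+1))) = 0) :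
    c = 0 := by
  by_contra hc
  have hdvd : ((p^(c.natAbs+1) : ℕ) : ℤ) ∣ c :=
    (ZMod.intCast_zmod_eq_zero_iff_dvd _ _).mp (h c.natAbs)
  have hle := Int.le_of_dvd (abs_pos.mpr hc) ((dvd_abs _ _).mpr hdvd)
  have h2 : (c.natAbs : ℤ) < ((p^(c.natAbs+1) : ℕ) : ℤ) := by
    have h3 : c.natAbs < p^(c.natAbs+1) :=
      lt_of_lt_of_le Nat.lt_two_pow_self
        (le_trans (Nat.pow_le_pow_right (by norm_num) (Nat.le_succ _))
          (Nat.pow_le_pow_left hp.two_le _))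
    exact_mod_cast h3
  rw [Int.abs_eq_natAbs] at hle
  omega

lemma zel_sub_not_tor (hp : p.Prime) (x : KG p) (hx : x ∉ Tor p) (m : ℕ)
    {s t : ℕ → Bool} (hst : s ≠ t) : zel p x m s - zel p x m t ∉ Tor p := by
  rintro ⟨c, hc, hc0⟩
  apply hx
  have hne : ∃ i, s i ≠ t i := by
    by_contra h
    push_neg at h
    exact hst (funext fun i => h i)
  set i₀ := Nat.find hne with hi₀
  have hdiff : s i₀ ≠ t i₀ := Nat.find_spec hne
  have hmin : ∀ j, j < i₀ → s j = t j := fun j hj => not_not.mp (Nat.find_min hne hj)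
  set E : ℤ := (if s i₀ then (1:ℤ) else 0) - (if t i₀ then 1 else 0) with hEdef
  have hE : E = 1 ∨ E = -1 := by
    rcases Bool.eq_false_or_eq_true (s i₀) with h1 | h1 <;>
      rcases Bool.eq_false_or_eq_true (t i₀) with h2 | h2 <;>
        simp [hEdef, h1, h2] at hdiff ⊢
  set a := c.natAbs with hadef
  have ha : a ≠ 0 := Int.natAbs_ne_zero.mpr hc
  set w := a.factorization p with hwdef
  set d := a / p ^ w with hddef
  have hfact : p ^ w * d = a := Nat.ordProj_mul_ordCompl_eq_self a p
  have hd : ¬ p ∣ d := Nat.not_dvd_ordCompl hp ha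
  have hsign : c = (a : ℤ) ∨ c = -(a : ℤ) := by
    rcases Int.natAbs_eq c with h | h
    · exact Or.inl (by rw [hadef]; exact h)
    · exact Or.inr (by rw [hadef]; exact h)
  have hcoord : ∀ n, ((c * (cI p m s n - cI p m t n) : ℤ) : ZMod (p^(n+1))) * x n = 0 := by
    intro n
    have h := congrFun hc0 n
    rw [Pi.smul_apply, Pi.sub_apply] at h
    have h2 : c • (((cI p m s n : ℤ) : ZMod (p^(n+1))) * x n
        - ((cI p m t n : ℤ) : ZMod (p^(n+1))) * x n) = 0 := h
    rw [zsmul_eq_mul] at h2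
    push_cast
    push_cast at h2
    linear_combination h2
  clear_value d w a E
  clear hi₀ hadef hwdef hddef
  refine ⟨(p:ℤ)^((w + (m+1+i₀)) + i₀), pow_ne_zero _ (by exact_mod_cast hp.ne_zero), ?_⟩
  funext n
  rw [Pi.smul_apply, zsmul_eq_mul]
  push_cast
  show (p : ZMod (p^(n+1)))^((w + (m+1+i₀)) + i₀) * x n = 0
  have hpzero : ((p : ZMod (p^(n+1))))^(n+1) = 0 := by
    rw [← Nat.cast_pow, ZMod.natCast_self]
  rcases lt_or_ge n i₀ with hlt | hge
  · have hsplitpow : (p : ZMod (p^(n+1)))^((w + (m+1+i₀)) + i₀)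
        = (p : ZMod (p^(n+1)))^(n+1) * (p : ZMod (p^(n+1)))^(((w + (m+1+i₀)) + i₀) - (n+1)) := by
      rw [← pow_add]
      congr 1
      omega
    rw [hsplitpow, hpzero, zero_mul, zero_mul]
  · obtain ⟨k, hk⟩ := cI_sub_factor p m s t i₀ hmin hge
    rw [← hEdef] at hk
    have hcn := hcoord n
    rw [hk] at hcn
    have habs : (((a:ℤ) * ((p:ℤ)^(m+1+i₀) * (E + p * k)) : ℤ) : ZMod (p^(n+1))) * x n = 0 := by
      rcases hsign with hs' | hs'
      · rw [hs'] at hcn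
        exact hcn
      · rw [hs'] at hcn
        push_cast at hcn ⊢
        linear_combination -hcn
    have hre : ((a:ℤ) * ((p:ℤ)^(m+1+i₀) * (E + p * k))) =
        (p:ℤ)^(w + (m+1+i₀)) * ((d:ℤ) * (E + p * k)) := by
      rw [← hfact]
      push_cast
      ring
    rw [hre] at habs
    have hEu : IsUnit (((E + p * k : ℤ)) : ZMod (p^(n+1))) := by
      rcases hE with h | h
      · rw [h]
        push_cast
        exact isUnit_one_add_p_mul p n _
      · rw [h]
        have hcast2 : (((-1 : ℤ) + p * k : ℤ) : ZMod (p^(n+1)))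
            = -(1 + (p : ZMod (p^(n+1))) * (-(k : ZMod (p^(n+1))))) := by
          push_cast
          ring
        rw [hcast2]
        exact (isUnit_one_add_p_mul p n _).neg
    have hdu : IsUnit (((d : ℕ)) : ZMod (p^(n+1))) := isUnit_coprime p hp n d hd
    have hu : IsUnit ((((d:ℤ) * (E + p * k) : ℤ)) : ZMod (p^(n+1))) := by
      push_cast
      push_cast at hEu
      exact hdu.mul hEu
    have hcancel : (p : ZMod (p^(n+1)))^(w + (m+1+i₀)) * x n = 0 := by
      apply hu.mul_right_eq_zero.mp
      push_cast at habs ⊢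
      linear_combination habs
    have hsplitpow : (p : ZMod (p^(n+1)))^((w + (m+1+i₀)) + i₀)
        = (p : ZMod (p^(n+1)))^(i₀) * (p : ZMod (p^(n+1)))^(w + (m+1+i₀)) := by
      rw [← pow_add]
      congr 1
      omega
    rw [hsplitpow, mul_assoc, hcancel, mul_zero]

lemma cI_zero_factor (s : ℕ → Bool) (n : ℕ) : ∃ k : ℤ, cI p 0 s n = p * k := by
  refine ⟨∑ i ∈ Finset.range (n+1), (if s i then (p:ℤ)^i else 0), ?_⟩
  unfold cI
  rw [Finset.mul_sum]
  apply Finset.sum_congr rfl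
  intro i _
  split
  · have e : 0 + 1 + i = 1 + i := by omega
    rw [e, pow_add, pow_one]
  · rw [mul_zero]

lemma base_not_tor (hp : p.Prime) (s : ℕ → Bool) :
    eone p + zel p (eone p) 0 s ∉ Tor p := by
  rintro ⟨c, hc, hc0⟩
  apply hc
  apply int_eq_zero p hp
  intro n
  have h := congrFun hc0 n
  rw [Pi.smul_apply, Pi.add_apply, zsmul_eq_mul] at h
  obtain ⟨k, hk⟩ := cI_zero_factor p s n
  have hcast : ((cI p 0 s n : ℤ) : ZMod (p^(n+1)))
      = (p : ZMod (p^(n+1))) * ((k : ℤ) : ZMod (p^(n+1))) := by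
    rw [hk]; push_cast; ring
  have hu : IsUnit ((1 : ZMod (p^(n+1))) + (p : ZMod (p^(n+1))) * ((k : ℤ) : ZMod (p^(n+1)))) :=
    isUnit_one_add_p_mul p n _
  apply hu.mul_right_eq_zero.mp
  show _ * ((c : ℤ) : ZMod (p^(n+1))) = 0
  have h2 : ((c:ℤ) : ZMod (p^(n+1))) * ((eone p) n + zel p (eone p) 0 s n) = 0 := h
  show ((1 : ZMod (p^(n+1))) + _) * _ = 0
  have he : (eone p) n = 1 := rfl
  have hz : zel p (eone p) 0 s n
      = ((cI p 0 s n : ℤ) : ZMod (p^(n+1))) * 1 := rfl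
  rw [he, hz, hcast] at h2
  linear_combination h2

lemma eone_not_tor (hp : p.Prime) : eone p ∉ Tor p := by
  have h := base_not_tor p hp (fun _ => false)
  have hz : zel p (eone p) 0 (fun _ => false) = 0 := by
    funext n
    unfold zel cI
    simp
  rw [hz, add_zero] at h
  exact h


abbrev QG := KG p ⧸ Tor p

def qm : KG p →+ QG p := QuotientAddGroup.mk' (Tor p)

def SatQ (A : Set (QG p)) : Set (QG p) :=
  {v | ∃ c : ℤ, c ≠ 0 ∧ c • v ∈ Submodule.span ℤ A}

lemma QG_tf (c : ℤ) (hc : c ≠ 0) (v : QG p) (h : c • v = 0) : v = 0 := by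
  induction v using QuotientAddGroup.induction_on with
  | H y =>
    have h1 : ((c • y : KG p) : QG p) = 0 := by
      rw [← h]; rfl
    rw [QuotientAddGroup.eq_zero_iff] at h1
    obtain ⟨d, hd, hdc⟩ := h1
    have hy : y ∈ Tor p := ⟨d * c, mul_ne_zero hd hc, by rw [mul_smul]; exact hdc⟩
    exact (QuotientAddGroup.eq_zero_iff y).mpr hy

lemma mk_span_int_le {M : Type} [AddCommGroup M] (A : Set M) :
    #(Submodule.span ℤ A : Set M) ≤ max ℵ₀ #A := by
  classical
  have hrep : ∀ v ∈ Submodule.span ℤ A, ∃ l : List (↥A × Bool),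
      (l.map fun q => if q.2 then (q.1 : M) else -(q.1 : M)).sum = v := by
    have hsub : (Submodule.span ℤ A : Set M) ⊆ (AddSubgroup.closure A : AddSubgroup M) := by
      intro x hx
      exact (Submodule.span_le.mpr (fun y hy => AddSubgroup.subset_closure hy) :
        Submodule.span ℤ A ≤ AddSubgroup.toIntSubmodule (AddSubgroup.closure A)) hx
    intro v hv
    refine AddSubgroup.closure_induction ?_ ?_ ?_ ?_ (hsub hv)
    · intro x hx
      exact ⟨[(⟨x, hx⟩, true)], by simp⟩
    · exact ⟨[], by simp⟩
    · rintro x y _ _ ⟨l1, h1⟩ ⟨l2, h2⟩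
      exact ⟨l1 ++ l2, by rw [List.map_append, List.sum_append, h1, h2]⟩
    · rintro x _ ⟨l, h1⟩
      refine ⟨l.map (fun q => (q.1, !q.2)), ?_⟩
      rw [List.map_map]
      have key : ∀ l' : List (↥A × Bool),
          (l'.map ((fun (q : ↥A × Bool) => if q.2 then (q.1 : M) else -(q.1 : M)) ∘
            fun (q : ↥A × Bool) => (q.1, !q.2))).sum
          = -((l'.map (fun (q : ↥A × Bool) => if q.2 then (q.1 : M) else -(q.1 : M))).sum) := by
        intro l'
        induction l' with
        | nil => simp
        | cons hd tl ih =>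
          simp only [List.map_cons, List.sum_cons, ih]
          rcases hd with ⟨xx, b⟩
          cases b <;> simp <;> abel
      rw [key, h1]
  have hinj : ∃ f : (Submodule.span ℤ A : Set M) → List (↥A × Bool), Function.Injective f := by
    refine ⟨fun v => (hrep v.1 v.2).choose, ?_⟩
    intro v v' h
    have h2 : (hrep v.1 v.2).choose = (hrep v'.1 v'.2).choose := h
    apply Subtype.ext
    rw [← (hrep v.1 v.2).choose_spec, ← (hrep v'.1 v'.2).choose_spec, h2]
  obtain ⟨f, hf⟩ := hinj
  have h2 : #(↥A × Bool) ≤ max ℵ₀ #A := by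
    have h1 : #(↥A × Bool) = #(↥A) * 2 := by
      rw [Cardinal.mk_prod, Cardinal.mk_bool]
      simp
    rw [h1]
    rcases le_total (#(↥A)) ℵ₀ with hc | hc
    · refine le_trans ?_ (le_max_left _ _)
      calc #(↥A) * 2 ≤ ℵ₀ * ℵ₀ :=
            mul_le_mul' hc (le_of_lt (by exact_mod_cast Cardinal.nat_lt_aleph0 2))
        _ = ℵ₀ := Cardinal.aleph0_mul_aleph0
    · refine le_trans ?_ (le_max_right _ _)
      calc #(↥A) * 2 ≤ #(↥A) * #(↥A) :=
            mul_le_mul' le_rfl (le_trans (le_of_lt (by exact_mod_cast Cardinal.nat_lt_aleph0 2)) hc)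
        _ = #(↥A) := Cardinal.mul_eq_self hc
  calc #(Submodule.span ℤ A : Set M) ≤ #(List (↥A × Bool)) := Cardinal.mk_le_of_injective hf
    _ ≤ max ℵ₀ #(↥A × Bool) := Cardinal.mk_list_le_max _
    _ ≤ max ℵ₀ (max ℵ₀ #A) := max_le_max le_rfl h2
    _ = max ℵ₀ #A := by rw [← max_assoc, max_self]

lemma mk_SatQ_lt (A : Set (QG p)) (hA : #A < continuum) : #(SatQ p A) < continuum := by
  classical
  have hspan : #(Submodule.span ℤ A : Set (QG p)) < continuum :=
    lt_of_le_of_lt (mk_span_int_le A) (max_lt Cardinal.aleph0_lt_continuum hA)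
  have hf : ∃ f : ↥(SatQ p A) → ℤ × ↥(Submodule.span ℤ A : Set (QG p)),
      Function.Injective f := by
    refine ⟨fun v => ⟨v.2.choose, ⟨v.2.choose • v.1, v.2.choose_spec.2⟩⟩, ?_⟩
    intro v v' h
    have h' : ((v.2.choose, ⟨v.2.choose • v.1, v.2.choose_spec.2⟩) :
        ℤ × ↥(Submodule.span ℤ A : Set (QG p)))
        = (v'.2.choose, ⟨v'.2.choose • v'.1, v'.2.choose_spec.2⟩) := h
    have h1 : v.2.choose = v'.2.choose := congrArg Prod.fst h'
    have h2 : v.2.choose • (v.1 : QG p) = v'.2.choose • (v'.1 : QG p) :=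
      congrArg (fun q => ((q.2 : ↥(Submodule.span ℤ A : Set (QG p))) : QG p)) h'
    rw [h1] at h2
    have h3 : v'.2.choose • ((v.1 : QG p) - (v'.1 : QG p)) = 0 := by
      rw [zsmul_sub, h2, sub_self]
    have h4 := QG_tf p _ v'.2.choose_spec.1 _ h3
    exact Subtype.ext (by rwa [sub_eq_zero] at h4)
  obtain ⟨f, hf⟩ := hf
  calc #(SatQ p A) ≤ #(ℤ × ↥(Submodule.span ℤ A : Set (QG p))) := Cardinal.mk_le_of_injective hf
    _ = ℵ₀ * #(Submodule.span ℤ A : Set (QG p)) := by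
        rw [Cardinal.mk_prod, Cardinal.mk_int, Cardinal.lift_id, Cardinal.lift_id]
    _ < continuum := Cardinal.mul_lt_of_lt Cardinal.aleph0_le_continuum
        Cardinal.aleph0_lt_continuum hspan

lemma mk_nb : #(ℕ → Bool) = continuum := by
  calc #(ℕ → Bool) = (#Bool) ^ (#ℕ) := (Cardinal.power_def Bool ℕ).symm
    _ = 2 ^ ℵ₀ := by rw [Cardinal.mk_bool, Cardinal.mk_nat]
    _ = continuum := Cardinal.two_power_aleph0

lemma mk_KG_le (hp : p.Prime) : #(KG p) ≤ continuum := by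
  haveI : ∀ n : ℕ, NeZero (p ^ (n+1)) := fun n => ⟨pow_ne_zero _ hp.ne_zero⟩
  have hinj : Function.Injective (fun (y : KG p) (n : ℕ) => (y n).val) := by
    intro y z h
    funext n
    exact ZMod.val_injective _ (congrFun h n)
  calc #(KG p) ≤ #(ℕ → ℕ) := Cardinal.mk_le_of_injective hinj
    _ = ℵ₀ ^ ℵ₀ := by rw [← Cardinal.power_def, Cardinal.mk_nat]
    _ = continuum := Cardinal.aleph0_power_aleph0

def iiT := ({x : KG p // x ∉ Tor p} × ℕ)

lemma mk_iiT (hp : p.Prime) : #(iiT p) = continuum := by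
  apply le_antisymm
  · have hinj : Function.Injective
        (fun (q : iiT p) => ((q.1.val, q.2) : KG p × ℕ)) := by
      intro q q' h
      have h' : ((q.1.val, q.2) : KG p × ℕ) = (q'.1.val, q'.2) := h
      have h1 := congrArg Prod.fst h'
      have h2 := congrArg Prod.snd h'
      simp only at h1 h2
      exact Prod.ext (Subtype.ext h1) h2
    calc #(iiT p) ≤ #(KG p × ℕ) := Cardinal.mk_le_of_injective hinj
      _ = #(KG p) * ℵ₀ := by rw [Cardinal.mk_prod, Cardinal.mk_nat]; simp
      _ ≤ continuum * continuum :=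
          mul_le_mul' (mk_KG_le p hp) Cardinal.aleph0_le_continuum
      _ = continuum := Cardinal.mul_eq_self Cardinal.aleph0_le_continuum
  · rw [← mk_nb]
    apply Cardinal.mk_le_of_injective
      (f := fun s : ℕ → Bool =>
        ((⟨eone p + zel p (eone p) 0 s, base_not_tor p hp s⟩, 0) : iiT p))
    intro s t h
    have h' : ((⟨eone p + zel p (eone p) 0 s, base_not_tor p hp s⟩, 0) : iiT p)
        = (⟨eone p + zel p (eone p) 0 t, base_not_tor p hp t⟩, 0) := h
    have h1 : eone p + zel p (eone p) 0 s = eone p + zel p (eone p) 0 t :=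
      congrArg (fun q => (q.1 : {x : KG p // x ∉ Tor p}).val) h' 
    by_contra hst
    apply zel_sub_not_tor p hp (eone p) (eone_not_tor p hp) 0 hst
    have h2 : zel p (eone p) 0 s - zel p (eone p) 0 t = 0 := by
      have h3 := add_left_cancel h1
      rw [h3, sub_self]
    rw [h2]
    exact (Tor p).zero_mem

lemma exW (hp : p.Prime) (x : KG p) (hx : x ∉ Tor p) (m : ℕ) (B : Set (QG p))
    (hB : #B < continuum) : ∃ s : ℕ → Bool, qm p (x + zel p x m s) ∉ B := by
  by_contra h
  push_neg at h
  have hinj : Function.Injective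
      (fun s : ℕ → Bool => (⟨qm p (x + zel p x m s), h s⟩ : ↥B)) := by
    intro s t hq
    by_contra hst
    apply zel_sub_not_tor p hp x hx m hst
    have hq' : (⟨qm p (x + zel p x m s), h s⟩ : ↥B) = ⟨qm p (x + zel p x m t), h t⟩ := hq
    have h1 : qm p (x + zel p x m s) = qm p (x + zel p x m t) := congrArg Subtype.val hq' 
    rw [qm, QuotientAddGroup.mk'_apply, QuotientAddGroup.mk'_apply,
      QuotientAddGroup.eq_iff_sub_mem] at h1
    have h2 : x + zel p x m s - (x + zel p x m t) = zel p x m s - zel p x m t := by abel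
    rwa [h2] at h1
  have hcc := Cardinal.mk_le_of_injective hinj
  rw [mk_nb] at hcc
  exact absurd hcc (not_le.mpr hB)

lemma exX (hp : p.Prime) (B : Set (QG p)) (hB : #B < continuum) :
    ∃ t : ℕ → Bool, qm p (zel p (eone p) 0 t) ∉ B := by
  by_contra h
  push_neg at h
  have hinj : Function.Injective
      (fun s : ℕ → Bool => (⟨qm p (zel p (eone p) 0 s), h s⟩ : ↥B)) := by
    intro s t hq
    by_contra hst
    apply zel_sub_not_tor p hp (eone p) (eone_not_tor p hp) 0 hst
    have hq' : (⟨qm p (zel p (eone p) 0 s), h s⟩ : ↥B) = ⟨qm p (zel p (eone p) 0 t), h t⟩ := hq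
    have h1 : qm p (zel p (eone p) 0 s) = qm p (zel p (eone p) 0 t) := congrArg Subtype.val hq' 
    rw [qm, QuotientAddGroup.mk'_apply, QuotientAddGroup.mk'_apply,
      QuotientAddGroup.eq_iff_sub_mem] at h1
    exact h1
  have hcc := Cardinal.mk_le_of_injective hinj
  rw [mk_nb] at hcc
  exact absurd hcc (not_le.mpr hB)

lemma mem_closure_cyl (A : Set (KG p)) (z : KG p)
    (h : ∀ m, ∃ a ∈ A, ∀ n ≤ m, a n = z n) : z ∈ @closure _ (Ktop p) A := by
  letI : ∀ n : ℕ, TopologicalSpace (ZMod (p ^ (n + 1))) := fun _ => ⊥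
  letI tK : TopologicalSpace (KG p) := Pi.topologicalSpace
  show z ∈ @closure _ tK A
  rw [mem_closure_iff]
  intro o ho hzo
  obtain ⟨I, u, hu, hsub⟩ := isOpen_pi_iff.mp ho z hzo
  obtain ⟨a, haA, ha⟩ := h (I.sup id)
  refine ⟨a, ⟨hsub ?_, haA⟩⟩
  intro i hi
  rw [ha i (Finset.le_sup (f := id) hi)]
  exact (hu i hi).2

lemma zmul_closure_subset (L : AddSubgroup (KG p)) (hL : @IsClosed _ (Ktop p) (L : Set (KG p)))
    {x : KG p} (hx : x ∈ L) :
    @closure _ (Ktop p) {v : KG p | ∃ k : ℤ, k • x = v} ⊆ (L : Set (KG p)) := by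
  letI : TopologicalSpace (KG p) := Ktop p
  refine closure_minimal ?_ hL
  rintro v ⟨k, rfl⟩
  exact AddSubgroup.zsmul_mem L hx k

lemma wit_mem_closure (x : KG p) (m : ℕ) (s : ℕ → Bool) :
    x + zel p x m s ∈ @closure _ (Ktop p) {v : KG p | ∃ k : ℤ, k • x = v} := by
  apply mem_closure_cyl
  intro m'
  refine ⟨(1 + cI p m s m') • x, ⟨1 + cI p m s m', rfl⟩, ?_⟩
  intro n hn
  rw [Pi.smul_apply, zsmul_eq_mul, Pi.add_apply]
  have hz : zel p x m s n = ((cI p m s n : ℤ) : ZMod (p ^ (n + 1))) * x n := rfl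
  have hdvd : ((cI p m s m' - cI p m s n : ℤ) : ZMod (p ^ (n + 1))) = 0 := by
    rw [ZMod.intCast_zmod_eq_zero_iff_dvd]
    exact_mod_cast dvd_cI_sub p m s hn
  rw [hz]
  push_cast at hdvd ⊢
  linear_combination (x n) * hdvd

def rwo : iiT p → iiT p → Prop := (Cardinal.ord_eq (iiT p)).choose

def rwo_wo : IsWellOrder (iiT p) (rwo p) := (Cardinal.ord_eq (iiT p)).choose_spec.choose

lemma rwo_type : (#(iiT p)).ord = @Ordinal.type _ (rwo p) (rwo_wo p) :=
  (Cardinal.ord_eq (iiT p)).choose_spec.choose_spec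

lemma mk_seg_lt (hp : p.Prime) (i : iiT p) : #{j : iiT p // rwo p j i} < continuum := by
  haveI := rwo_wo p
  have h1 : #{j : iiT p // rwo p j i} = ((Ordinal.typein (rwo p)).toRelEmbedding i).card :=
    Ordinal.card_typein i
  have h2' : ((Ordinal.typein (rwo p)).toRelEmbedding i) < (#(iiT p)).ord := by
    rw [rwo_type]
    exact Ordinal.typein_lt_type (rwo p) i
  have h3 : ((Ordinal.typein (rwo p)).toRelEmbedding i).card < continuum := by
    rw [← mk_iiT p hp]
    exact Cardinal.lt_ord.mp h2'
  rw [h1]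
  exact h3

def wfr : WellFounded (rwo p) := (rwo_wo p).toIsWellFounded.wf

def wit (i : iiT p) (s : ℕ → Bool) : KG p := i.1.1 + zel p i.1.1 i.2 s

def stepP (i : iiT p) (rec : ∀ j, rwo p j i → (ℕ → Bool) × (ℕ → Bool)) : Set (QG p) :=
  Set.range (fun jh : {j : iiT p // rwo p j i} => qm p (wit p jh.1 ((rec jh.1 jh.2).1))) ∪
  Set.range (fun jh : {j : iiT p // rwo p j i} => qm p (zel p (eone p) 0 ((rec jh.1 jh.2).2)))

lemma stepP_small (hp : p.Prime) (i : iiT p)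
    (rec : ∀ j, rwo p j i → (ℕ → Bool) × (ℕ → Bool)) : #(stepP p i rec) < continuum :=
  lt_of_le_of_lt (Cardinal.mk_union_le _ _)
    (Cardinal.add_lt_of_lt Cardinal.aleph0_le_continuum
      (lt_of_le_of_lt Cardinal.mk_range_le (mk_seg_lt p hp i))
      (lt_of_le_of_lt Cardinal.mk_range_le (mk_seg_lt p hp i)))

lemma union_singleton_small {A : Set (QG p)} (hA : #A < continuum) (v : QG p) :
    #((A ∪ {v}) : Set (QG p)) < continuum :=
  lt_of_le_of_lt (Cardinal.mk_union_le _ _)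
    (Cardinal.add_lt_of_lt Cardinal.aleph0_le_continuum hA
      (by rw [Cardinal.mk_singleton]
          exact lt_trans Cardinal.one_lt_aleph0 Cardinal.aleph0_lt_continuum))

def stepS (hp : p.Prime) (i : iiT p) (rec : ∀ j, rwo p j i → (ℕ → Bool) × (ℕ → Bool)) :
    {s : ℕ → Bool // qm p (i.1.1 + zel p i.1.1 i.2 s) ∉ SatQ p (stepP p i rec)} :=
  Classical.indefiniteDescription _
    (exW p hp i.1.1 i.1.2 i.2 (SatQ p (stepP p i rec))
      (mk_SatQ_lt p _ (stepP_small p hp i rec)))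

def stepT (hp : p.Prime) (i : iiT p) (rec : ∀ j, rwo p j i → (ℕ → Bool) × (ℕ → Bool)) :
    {t : ℕ → Bool // qm p (zel p (eone p) 0 t) ∉
      SatQ p (stepP p i rec ∪ {qm p (wit p i (stepS p hp i rec).1)})} :=
  Classical.indefiniteDescription _
    (exX p hp (SatQ p (stepP p i rec ∪ {qm p (wit p i (stepS p hp i rec).1)}))
      (mk_SatQ_lt p _ (union_singleton_small p (stepP_small p hp i rec) _)))

def stepF (hp : p.Prime) (i : iiT p) (rec : ∀ j, rwo p j i → (ℕ → Bool) × (ℕ → Bool)) :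
    (ℕ → Bool) × (ℕ → Bool) :=
  ((stepS p hp i rec).1, (stepT p hp i rec).1)

def Gfun (hp : p.Prime) : iiT p → (ℕ → Bool) × (ℕ → Bool) := (wfr p).fix (stepF p hp)

lemma Gfun_eq (hp : p.Prime) (i : iiT p) :
    Gfun p hp i = stepF p hp i (fun j _ => Gfun p hp j) :=
  WellFounded.fix_eq _ _ i

def wfunc (hp : p.Prime) (i : iiT p) : QG p := qm p (wit p i (Gfun p hp i).1)

def xfunc (hp : p.Prime) (i : iiT p) : QG p := qm p (zel p (eone p) 0 (Gfun p hp i).2)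

def Pset (hp : p.Prime) (i : iiT p) : Set (QG p) :=
  Set.range (fun jh : {j : iiT p // rwo p j i} => wfunc p hp jh.1) ∪
  Set.range (fun jh : {j : iiT p // rwo p j i} => xfunc p hp jh.1)

lemma Pset_eq (hp : p.Prime) (i : iiT p) :
    stepP p i (fun j _ => Gfun p hp j) = Pset p hp i := rfl

lemma prop1 (hp : p.Prime) (i : iiT p) : wfunc p hp i ∉ SatQ p (Pset p hp i) := by
  have he := Gfun_eq p hp i
  have h1 : (Gfun p hp i).1 = (stepS p hp i (fun j _ => Gfun p hp j)).1 := by rw [he]; rfl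
  show qm p (wit p i (Gfun p hp i).1) ∉ SatQ p (Pset p hp i)
  rw [h1, ← Pset_eq p hp i]
  exact (stepS p hp i (fun j _ => Gfun p hp j)).2

lemma prop2 (hp : p.Prime) (i : iiT p) :
    xfunc p hp i ∉ SatQ p (Pset p hp i ∪ {wfunc p hp i}) := by
  have he := Gfun_eq p hp i
  have h1 : (Gfun p hp i).1 = (stepS p hp i (fun j _ => Gfun p hp j)).1 := by rw [he]; rfl
  have h2 : (Gfun p hp i).2 = (stepT p hp i (fun j _ => Gfun p hp j)).1 := by rw [he]; rfl
  have hw : wfunc p hp i = qm p (wit p i (stepS p hp i (fun j _ => Gfun p hp j)).1) := by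
    show qm p (wit p i (Gfun p hp i).1) = _
    rw [h1]
  show qm p (zel p (eone p) 0 (Gfun p hp i).2) ∉ _
  rw [h2, hw, ← Pset_eq p hp i]
  exact (stepT p hp i (fun j _ => Gfun p hp j)).2

lemma exists_greatest {β : Type} (r : β → β → Prop)
    (htr : ∀ a b c, r a b → r b c → r a c)
    (htri : ∀ a b, r a b ∨ a = b ∨ r b a)
    (F : Finset β) (hF : F.Nonempty) : ∃ a ∈ F, ∀ b ∈ F, b = a ∨ r b a := by
  classical
  induction F using Finset.induction_on with
  | empty => simp at hF
  | @insert x F hxF ih =>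
    rcases F.eq_empty_or_nonempty with hFe | hFne
    · subst hFe
      refine ⟨x, Finset.mem_insert_self x _, ?_⟩
      intro b hb
      rcases Finset.mem_insert.mp hb with rfl | hb'
      · exact Or.inl rfl
      · simp at hb'
    · obtain ⟨a, haF, hmax⟩ := ih hFne
      rcases htri x a with hxa | hxa | hax
      · refine ⟨a, Finset.mem_insert_of_mem haF, ?_⟩
        intro b hb
        rcases Finset.mem_insert.mp hb with rfl | hb'
        · exact Or.inr hxa
        · exact hmax b hb'
      · refine ⟨a, Finset.mem_insert_of_mem haF, ?_⟩
        intro b hb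
        rcases Finset.mem_insert.mp hb with rfl | hb'
        · exact Or.inl hxa
        · exact hmax b hb'
      · refine ⟨x, Finset.mem_insert_self _ _, ?_⟩
        intro b hb
        rcases Finset.mem_insert.mp hb with rfl | hb'
        · exact Or.inl rfl
        · rcases hmax b hb' with rfl | hba
          · exact Or.inr hax
          · exact Or.inr (htr b a x hba hax)

lemma ML (hp : p.Prime) (i : iiT p) :
    xfunc p hp i ∉ (Submodule.span ℤ
      (Set.range (wfunc p hp) ∪ xfunc p hp '' {l : iiT p | l ≠ i}) : Set (QG p)) := by
  classical
  haveI hwo := rwo_wo p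
  intro hmem
  have hx0 : xfunc p hp i ≠ 0 := by
    intro h0
    apply prop2 p hp i
    exact ⟨1, one_ne_zero, by rw [h0, smul_zero]; exact Submodule.zero_mem _⟩
  obtain ⟨c, hsupp, hsum⟩ := Submodule.mem_span_set.mp hmem
  have htag : ∀ v ∈ c.support,
      (∃ j, wfunc p hp j = v) ∨ (∃ j, j ≠ i ∧ xfunc p hp j = v) := by
    intro v hv
    rcases hsupp hv with h | h
    · obtain ⟨j, hj⟩ := h
      exact Or.inl ⟨j, hj⟩
    · obtain ⟨j, hj1, hj2⟩ := h
      exact Or.inr ⟨j, hj1, hj2⟩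
  let tg : QG p → iiT p × Bool := fun v =>
    if h1 : ∃ j, wfunc p hp j = v then (h1.choose, false)
    else if h2 : ∃ j, j ≠ i ∧ xfunc p hp j = v then (h2.choose, true)
    else (i, true)
  have tspec : ∀ v ∈ c.support,
      ((tg v).2 = false ∧ wfunc p hp (tg v).1 = v) ∨
      ((tg v).2 = true ∧ (tg v).1 ≠ i ∧ xfunc p hp (tg v).1 = v) := by
    intro v hv
    by_cases h1 : ∃ j, wfunc p hp j = v
    · left
      have hval : wfunc p hp ((tg v).1) = v := by
        simp only [tg, dif_pos h1]
        exact h1.choose_spec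
      have hbool : (tg v).2 = false := by simp [tg, dif_pos h1]
      exact ⟨hbool, hval⟩
    · by_cases h2 : ∃ j, j ≠ i ∧ xfunc p hp j = v
      · right
        have hval : xfunc p hp ((tg v).1) = v := by
          simp only [tg, dif_neg h1, dif_pos h2]
          exact h2.choose_spec.2
        have hne' : (tg v).1 ≠ i := by
          simp only [tg, dif_neg h1, dif_pos h2]
          exact h2.choose_spec.1
        have hbool : (tg v).2 = true := by simp [tg, dif_neg h1, dif_pos h2]
        exact ⟨hbool, hne', hval⟩
      · rcases htag v hv with h | h
        · exact absurd h h1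
        · exact absurd h h2
  let rB : (iiT p × Bool) → (iiT p × Bool) → Prop :=
    fun a b => rwo p a.1 b.1 ∨ (a.1 = b.1 ∧ a.2 = false ∧ b.2 = true)
  have hBtr : ∀ a b c', rB a b → rB b c' → rB a c' := by
    rintro a b c' (h1 | ⟨h1, h2, h3⟩) (h4 | ⟨h4, h5, h6⟩)
    · exact Or.inl (IsTrans.trans _ _ _ h1 h4)
    · exact Or.inl (h4 ▸ h1)
    · exact Or.inl (by rw [h1]; exact h4)
    · rw [h3] at h5; simp at h5
  have hBtri : ∀ a b, rB a b ∨ a = b ∨ rB b a := by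
    intro a b
    rcases @trichotomous _ (rwo p) _ a.1 b.1 with h | h | h
    · exact Or.inl (Or.inl h)
    · rcases Bool.eq_false_or_eq_true a.2 with ha2 | ha2 <;>
        rcases Bool.eq_false_or_eq_true b.2 with hb2 | hb2
      · exact Or.inr (Or.inl (Prod.ext h (ha2.trans hb2.symm)))
      · exact Or.inr (Or.inr (Or.inr ⟨h.symm, hb2, ha2⟩))
      · exact Or.inl (Or.inr ⟨h, ha2, hb2⟩)
      · exact Or.inr (Or.inl (Prod.ext h (ha2.trans hb2.symm)))
    · exact Or.inr (Or.inr (Or.inl h))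
  have hPmem : ∀ v ∈ c.support, ∀ jj : iiT p, rwo p (tg v).1 jj → v ∈ Pset p hp jj := by
    intro v hv jj hr
    rcases tspec v hv with ⟨_, h2⟩ | ⟨_, _, h2⟩
    · exact Set.mem_union_left _ ⟨⟨(tg v).1, hr⟩, h2⟩
    · exact Set.mem_union_right _ ⟨⟨(tg v).1, hr⟩, h2⟩
  by_cases hne : c.support.Nonempty
  swap
  · have hc0 : c = 0 := Finsupp.support_eq_empty.mp (Finset.not_nonempty_iff_eq_empty.mp hne)
    rw [hc0, Finsupp.sum_zero_index] at hsum
    exact hx0 hsum.symm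
  obtain ⟨g, hgFs, hgmax⟩ := exists_greatest rB hBtr hBtri (c.support.image tg) (hne.image tg)
  obtain ⟨v0, hv0supp, htgv0⟩ := Finset.mem_image.mp hgFs
  have hgne : g ≠ (i, true) := by
    intro hgi
    rcases tspec v0 hv0supp with ⟨h1, _⟩ | ⟨_, h2, _⟩
    · rw [htgv0, hgi] at h1
      simp at h1
    · rw [htgv0, hgi] at h2
      simp at h2
  have hcv0 : c v0 ≠ 0 := Finsupp.mem_support_iff.mp hv0supp
  have hiso : c v0 • v0 + ∑ v ∈ c.support.erase v0, c v • v = xfunc p hp i := by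
    rw [Finset.add_sum_erase _ (fun v : QG p => c v • v) hv0supp]
    exact hsum
  rcases hBtri g (i, true) with hcase | hcase | hcase
  · -- everything is below (i, true)
    have hall : ∀ v ∈ c.support, v ∈ (Pset p hp i ∪ {wfunc p hp i} : Set (QG p)) := by
      intro v hv
      have hvg : tg v = g ∨ rB (tg v) g := hgmax (tg v) (Finset.mem_image_of_mem tg hv)
      have hvb : rB (tg v) (i, true) := by
        rcases hvg with heq | hvg
        · rw [heq]; exact hcase
        · exact hBtr _ _ _ hvg hcase
      rcases hvb with hr | ⟨h1, h2, _⟩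
      · exact Set.mem_union_left _ (hPmem v hv i hr)
      · rcases tspec v hv with ⟨_, h4⟩ | ⟨h3, _, _⟩
        · exact Set.mem_union_right _ (Set.mem_singleton_iff.mpr (by rw [← h4, h1]))
        · rw [h3] at h2; simp at h2
    apply prop2 p hp i
    refine ⟨1, one_ne_zero, ?_⟩
    rw [one_zsmul, ← hsum]
    show (∑ v ∈ c.support, c v • v) ∈ _
    exact Submodule.sum_mem _ fun v hv =>
      Submodule.smul_mem _ _ (Submodule.subset_span (hall v hv))
  · exact absurd hcase hgne
  · -- rB (i, true) g
    have hrig : rwo p i g.1 := by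
      rcases hcase with h | ⟨_, h2, _⟩
      · exact h
      · simp at h2
    have hxi : xfunc p hp i ∈ Pset p hp g.1 :=
      Set.mem_union_right _ ⟨⟨i, hrig⟩, rfl⟩
    rcases tspec v0 hv0supp with ⟨hb, hval⟩ | ⟨hb, hnei, hval⟩
    · -- v0 = wfunc g.1, g.2 = false
      rw [htgv0] at hb hval
      have herase : ∀ v ∈ c.support.erase v0, v ∈ Pset p hp g.1 := by
        intro v hv'
        have hvsupp := Finset.mem_of_mem_erase hv'
        have hvne : v ≠ v0 := Finset.ne_of_mem_erase hv'
        rcases hgmax (tg v) (Finset.mem_image_of_mem tg hvsupp) with heq | hvg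
        · exfalso
          apply hvne
          have hbv : tg v = tg v0 := heq.trans htgv0.symm
          rcases tspec v hvsupp with ⟨hb1, hval1⟩ | ⟨hb1, _, hval1⟩
          · rw [← hval1, hbv, htgv0, hval]
          · rw [hbv, htgv0, hb] at hb1; simp at hb1
        · rcases hvg with hr | ⟨_, _, h3⟩
          · exact hPmem v hvsupp g.1 hr
          · rw [hb] at h3; simp at h3
      apply prop1 p hp g.1
      refine ⟨c v0, hcv0, ?_⟩
      have h1 : c v0 • wfunc p hp g.1 = xfunc p hp i - ∑ v ∈ c.support.erase v0, c v • v := by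
        rw [hval, ← hiso]; abel
      rw [h1]
      apply Submodule.sub_mem
      · exact Submodule.subset_span hxi
      · exact Submodule.sum_mem _ fun v hv' =>
          Submodule.smul_mem _ _ (Submodule.subset_span (herase v hv'))
    · -- v0 = xfunc g.1, g.2 = true, g.1 ≠ i
      rw [htgv0] at hb hnei hval
      have herase : ∀ v ∈ c.support.erase v0,
          v ∈ (Pset p hp g.1 ∪ {wfunc p hp g.1} : Set (QG p)) := by
        intro v hv'
        have hvsupp := Finset.mem_of_mem_erase hv'
        have hvne : v ≠ v0 := Finset.ne_of_mem_erase hv'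
        rcases hgmax (tg v) (Finset.mem_image_of_mem tg hvsupp) with heq | hvg
        · exfalso
          apply hvne
          have hbv : tg v = tg v0 := heq.trans htgv0.symm
          rcases tspec v hvsupp with ⟨hb1, hval1⟩ | ⟨hb1, _, hval1⟩
          · rw [hbv, htgv0, hb] at hb1; simp at hb1
          · rw [← hval1, hbv, htgv0, hval]
        · rcases hvg with hr | ⟨h1, h2, _⟩
          · exact Set.mem_union_left _ (hPmem v hvsupp g.1 hr)
          · rcases tspec v hvsupp with ⟨_, h4⟩ | ⟨h3, _, _⟩
            · exact Set.mem_union_right _ (Set.mem_singleton_iff.mpr (by rw [← h4, h1]))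
            · rw [h3] at h2; simp at h2
      apply prop2 p hp g.1
      refine ⟨c v0, hcv0, ?_⟩
      have h1 : c v0 • xfunc p hp g.1 = xfunc p hp i - ∑ v ∈ c.support.erase v0, c v • v := by
        rw [hval, ← hiso]; abel
      rw [h1]
      apply Submodule.sub_mem
      · exact Submodule.subset_span (Set.mem_union_left _ hxi)
      · exact Submodule.sum_mem _ fun v hv' =>
          Submodule.smul_mem _ _ (Submodule.subset_span (herase v hv'))

def Yfun (hp : p.Prime) (i : iiT p) : KG p := wit p i (Gfun p hp i).1

def XiE (hp : p.Prime) (i : iiT p) : KG p := zel p (eone p) 0 (Gfun p hp i).2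

def HS (hp : p.Prime) (S : Set (iiT p)) : AddSubgroup (KG p) :=
  AddSubgroup.closure (((Tor p : Set (KG p)) ∪ Set.range (Yfun p hp)) ∪ (XiE p hp '' S))

lemma HS_td (hp : p.Prime) (S : Set (iiT p)) (L : AddSubgroup (KG p))
    (hL : @IsClosed _ (Ktop p) (L : Set (KG p))) :
    (L : Set (KG p)) ⊆ @closure _ (Ktop p) ((HS p hp S : Set (KG p)) ∩ (L : Set (KG p))) := by
  intro x hx
  apply mem_closure_cyl
  intro m
  by_cases hxt : x ∈ Tor p
  · exact ⟨x, ⟨AddSubgroup.subset_closure (Or.inl (Or.inl hxt)), hx⟩, fun n _ => rfl⟩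
  · refine ⟨Yfun p hp (⟨x, hxt⟩, m), ⟨?_, ?_⟩, ?_⟩
    · exact AddSubgroup.subset_closure (Or.inl (Or.inr ⟨(⟨x, hxt⟩, m), rfl⟩))
    · have h1 : Yfun p hp (⟨x, hxt⟩, m) ∈ @closure _ (Ktop p) {v : KG p | ∃ k : ℤ, k • x = v} :=
        wit_mem_closure p x m _
      exact zmul_closure_subset p L hL hx h1
    · intro n hn
      show (x + zel p x m _) n = x n
      rw [Pi.add_apply, zel_low p x m _ hn, add_zero]

lemma HS_map (hp : p.Prime) (S : Set (iiT p)) : ∀ g ∈ HS p hp S,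
    qm p g ∈ Submodule.span ℤ (Set.range (wfunc p hp) ∪ xfunc p hp '' S) := by
  intro g hg
  have hle : HS p hp S ≤ AddSubgroup.comap (qm p)
      ((Submodule.span ℤ (Set.range (wfunc p hp) ∪ xfunc p hp '' S)).toAddSubgroup) := by
    refine (AddSubgroup.closure_le _).mpr ?_
    rintro y ((hy | hy) | hy)
    · have h0 : qm p y = 0 := (QuotientAddGroup.eq_zero_iff y).mpr hy
      show y ∈ AddSubgroup.comap (qm p)
        ((Submodule.span ℤ (Set.range (wfunc p hp) ∪ xfunc p hp '' S)).toAddSubgroup)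
      rw [AddSubgroup.mem_comap, h0]
      exact Submodule.zero_mem _
    · obtain ⟨j, rfl⟩ := hy
      exact Submodule.subset_span (Or.inl ⟨j, rfl⟩)
    · obtain ⟨j, hjS, rfl⟩ := hy
      exact Submodule.subset_span (Or.inr ⟨j, hjS, rfl⟩)
  exact hle hg

lemma HS_mono_inj (hp : p.Prime) : ∀ S S' : Set (iiT p), HS p hp S = HS p hp S' → S ⊆ S' := by
  intro S S' hss j hjS
  by_contra hjS'
  have h1 : XiE p hp j ∈ HS p hp S :=
    AddSubgroup.subset_closure (Or.inr ⟨j, hjS, rfl⟩)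
  rw [hss] at h1
  have h2 := HS_map p hp S' _ h1
  apply ML p hp j
  have hmono : (Set.range (wfunc p hp) ∪ xfunc p hp '' S') ⊆
      (Set.range (wfunc p hp) ∪ xfunc p hp '' {l : iiT p | l ≠ j}) := by
    refine Set.union_subset_union_right _ (Set.image_mono ?_)
    intro l hl hlj
    rw [hlj] at hl
    exact hjS' hl
  exact Submodule.span_mono hmono h2

theorem final (hp : p.Prime) : (2 : Cardinal) ^ Cardinal.continuum ≤
    Cardinal.mk {H : AddSubgroup (KG p) //
      ∀ L : AddSubgroup (KG p),
        @IsClosed _ (Ktop p) (L : Set (KG p)) →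
        (L : Set (KG p)) ⊆ @closure _ (Ktop p) ((H : Set (KG p)) ∩ (L : Set (KG p)))} := by
  have hinj : Function.Injective (fun S : Set (iiT p) =>
      (⟨HS p hp S, fun L hL => HS_td p hp S L hL⟩ :
        {H : AddSubgroup (KG p) //
          ∀ L : AddSubgroup (KG p),
            @IsClosed _ (Ktop p) (L : Set (KG p)) →
            (L : Set (KG p)) ⊆ @closure _ (Ktop p) ((H : Set (KG p)) ∩ (L : Set (KG p)))})) := by
    intro S S' h
    have h' := congrArg Subtype.val h
    simp only at h'
    exact le_antisymm (HS_mono_inj p hp S S' h') (HS_mono_inj p hp S' S h'.symm)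
  have hle := Cardinal.mk_le_of_injective hinj
  rw [Cardinal.mk_set, mk_iiT p hp] at hle
  exact hle

end TD18

end

theorem stmt18 (p : ℕ) (hp : p.Prime) :
    (2 : Cardinal) ^ Cardinal.continuum ≤
      Cardinal.mk {H : AddSubgroup (∀ n : ℕ, ZMod (p ^ (n + 1))) //
        ∀ L : AddSubgroup (∀ n : ℕ, ZMod (p ^ (n + 1))),
          @IsClosed _ (Ktop p) (L : Set (∀ n : ℕ, ZMod (p ^ (n + 1)))) →
          (L : Set (∀ n : ℕ, ZMod (p ^ (n + 1)))) ⊆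
            @closure _ (Ktop p)
              ((H : Set (∀ n : ℕ, ZMod (p ^ (n + 1)))) ∩ L)} := by
  exact TD18.final p hp
end
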